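/- If a tournament T factorizes as T = S_1 + ... + S_r into strong subtournaments (where every vertex of S_k beats every vertex of S_l for k < l), then the number of minimal feedback vertex sets of T equals the product of the numbers of minimal feedback vertex sets of the S_i. -/

import Mathlib

/-- A set `W` of vertices is acyclic if the digraph `r` restricted to `W`
has no directed cycle (the transitive closure restricted to `W` is irreflexive). -/
def AcyclicOn {V : Type*} (r : V → V → Prop) (W : Set V) : Prop :=
  ∀ v : V, ¬ Relation.TransGen (fun a b => a ∈ W ∧ b ∈ W ∧ r a b) v v

/-- A tournament: an irreflexive relation with exactly one arc between
every pair of distinct vertices. -/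
def IsTournament {V : Type*} (r : V → V → Prop) : Prop :=
  (∀ v : V, ¬ r v v) ∧ ∀ u v : V, u ≠ v → (r u v ↔ ¬ r v u)

/-- A feedback vertex set: its deletion leaves an acyclic digraph. -/
def IsFVS {V : Type*} (r : V → V → Prop) (F : Set V) : Prop :=
  AcyclicOn r Fᶜ

/-- A minimal feedback vertex set. -/
def IsMinimalFVS {V : Type*} (r : V → V → Prop) (F : Set V) : Prop :=
  IsFVS r F ∧ ∀ F' : Set V, F' ⊆ F → IsFVS r F' → F' = F

/-- A feedback vertex set of the subtournament induced on `S`. -/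
def IsFVSOn {V : Type*} (r : V → V → Prop) (S F : Set V) : Prop :=
  F ⊆ S ∧ AcyclicOn r (S \ F)

/-- A minimal feedback vertex set of the subtournament induced on `S`. -/
def IsMinimalFVSOn {V : Type*} (r : V → V → Prop) (S F : Set V) : Prop :=
  IsFVSOn r S F ∧ ∀ F' : Set V, F' ⊆ F → IsFVSOn r S F' → F' = F

/-- Strong (strongly connected): a directed path between any ordered pair. -/
def IsStrong {V : Type*} (r : V → V → Prop) : Prop :=
  ∀ u v : V, Relation.ReflTransGen r u v

/-- The subtournament induced on `S` is strong. -/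
def IsStrongOn {V : Type*} (r : V → V → Prop) (S : Set V) : Prop :=
  ∀ u ∈ S, ∀ v ∈ S, Relation.ReflTransGen (fun a b => a ∈ S ∧ b ∈ S ∧ r a b) u v

/-- The score (out-degree) of a vertex. -/
noncomputable def outScore {V : Type*} (r : V → V → Prop) (v : V) : ℕ :=
  {u : V | r v u}.ncard

/-- The number of minimal feedback vertex sets of a tournament. -/
noncomputable def fvsCount (V : Type*) (r : V → V → Prop) : ℕ :=
  {F : Set V | IsMinimalFVS r F}.ncard

/-- `maxMinFVS n` = maximum number of minimal FVSs over all `n`-vertex tournaments. -/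
noncomputable def maxMinFVS (n : ℕ) : ℕ :=
  sSup {k : ℕ | ∃ r : Fin n → Fin n → Prop, IsTournament r ∧ fvsCount (Fin n) r = k}


/-- If a tournament factorizes as `T = S_1 + ... + S_r` into strong subtournaments,
where every vertex of `S_i` beats every vertex of `S_j` for `i < j`, then the number of
minimal FVSs of `T` is the product of the numbers of minimal FVSs of the factors. -/
theorem stmt0 {V : Type*} [Fintype V] (r : V → V → Prop) (hT : IsTournament r)
    (m : ℕ) (S : Fin m → Set V)
    (hpart : ∀ v : V, ∃! i : Fin m, v ∈ S i)
    (hstrong : ∀ i : Fin m, IsStrongOn r (S i))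
    (hbeats : ∀ i j : Fin m, i < j → ∀ u ∈ S i, ∀ v ∈ S j, r u v) :
    {F : Set V | IsMinimalFVS r F}.ncard
      = ∏ i : Fin m, {F : Set V | IsMinimalFVSOn r (S i) F}.ncard := by
  classical
  choose idx hmem huniq using hpart
  -- arcs only go forward (or within a level) in the idx ordering
  have mono : ∀ a b : V, r a b → idx a ≤ idx b := by
    intro a b hab
    by_contra h
    push_neg at h
    have hne : b ≠ a := by
      rintro rfl; exact lt_irrefl _ h
    have hr : r b a := hbeats _ _ h b (hmem b) a (hmem a)
    exact ((hT.2 b a hne).mp hr) hab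
  have chain_mono : ∀ (W : Set V) (a b : V),
      Relation.TransGen (fun x y => x ∈ W ∧ y ∈ W ∧ r x y) a b → idx a ≤ idx b := by
    intro W a b h
    induction h with
    | single h => exact mono _ _ h.2.2
    | tail _ h ih => exact ih.trans (mono _ _ h.2.2)
  -- a cycle (or any path with equal endpoints' index) lives inside one level
  have restrict : ∀ (W : Set V) (a b : V),
      Relation.TransGen (fun x y => x ∈ W ∧ y ∈ W ∧ r x y) a b → idx a = idx b →
      Relation.TransGen (fun x y => x ∈ W ∩ S (idx a) ∧ y ∈ W ∩ S (idx a) ∧ r x y) a b := by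
    intro W a b h
    induction h with
    | @single b h =>
      intro heq
      exact .single ⟨⟨h.1, hmem a⟩, ⟨h.2.1, heq ▸ hmem b⟩, h.2.2⟩
    | @tail b' c hab hbc ih =>
      intro heq
      have h1 : idx a ≤ idx b' := chain_mono W a b' hab
      have h2 : idx b' ≤ idx c := mono _ _ hbc.2.2
      have hb' : idx b' = idx a := le_antisymm (heq ▸ h2) h1
      exact (ih hb'.symm).tail ⟨⟨hbc.1, hb' ▸ hmem b'⟩, ⟨hbc.2.1, heq ▸ hmem c⟩, hbc.2.2⟩
  have acyc_iff : ∀ W : Set V, AcyclicOn r W ↔ ∀ i, AcyclicOn r (W ∩ S i) := by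
    intro W
    constructor
    · intro h i v hv
      exact h v (Relation.TransGen.mono (fun x y hx => ⟨hx.1.1, hx.2.1.1, hx.2.2⟩) _ _ hv)
    · intro h v hv
      exact h (idx v) v (restrict W v v hv rfl)
  have fvs_iff : ∀ F : Set V, IsFVS r F ↔ ∀ i, AcyclicOn r (S i \ F) := by
    intro F
    rw [IsFVS, acyc_iff]
    refine forall_congr' fun i => ?_
    rw [show Fᶜ ∩ S i = S i \ F by ext x; simp [Set.mem_diff, and_comm]]
  have disj : ∀ i j : Fin m, i ≠ j → ∀ v, v ∈ S i → v ∈ S j → False := by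
    intro i j hij v hi hj
    exact hij ((huniq v i hi).trans (huniq v j hj).symm)
  have cover : ∀ F : Set V, F = ⋃ i, F ∩ S i := by
    intro F
    ext v
    simp only [Set.mem_iUnion, Set.mem_inter_iff]
    exact ⟨fun hv => ⟨idx v, hv, hmem v⟩, fun ⟨i, hv, _⟩ => hv⟩
  have inter_union : ∀ (G : Fin m → Set V), (∀ i, G i ⊆ S i) →
      ∀ i, (⋃ j, G j) ∩ S i = G i := by
    intro G hG i
    ext v
    simp only [Set.mem_inter_iff, Set.mem_iUnion]
    constructor
    · rintro ⟨⟨j, hvj⟩, hvS⟩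
      rcases eq_or_ne j i with rfl | hne
      · exact hvj
      · exact absurd (disj j i hne v (hG j hvj) hvS) not_false
    · intro hv
      exact ⟨⟨i, hv⟩, hG i hv⟩
  -- forward direction
  have fwd : ∀ F : Set V, IsMinimalFVS r F → ∀ i, IsMinimalFVSOn r (S i) (F ∩ S i) := by
    rintro F ⟨hF, hmin⟩ i
    refine ⟨⟨Set.inter_subset_right, ?_⟩, ?_⟩
    · have h := (fvs_iff F).mp hF i
      rwa [show S i \ (F ∩ S i) = S i \ F by ext v; simp [Set.mem_diff]]
    · intro F' hsub hF'
      set G := (F \ S i) ∪ F' with hGdef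
      have hGsub : G ⊆ F :=
        Set.union_subset Set.diff_subset (hsub.trans Set.inter_subset_left)
      have hGfvs : IsFVS r G := by
        rw [fvs_iff]
        intro j
        rcases eq_or_ne j i with rfl | hne
        · have hEq : S j \ G = S j \ F' := by
            ext v
            simp only [hGdef, Set.mem_diff, Set.mem_union, not_or, Set.mem_diff]
            tauto
          rw [hEq]; exact hF'.2
        · have hEq : S j \ G = S j \ F := by
            ext v
            simp only [hGdef, Set.mem_diff, Set.mem_union, not_or, Set.mem_diff]
            constructor
            · rintro ⟨hvS, h1, h2⟩
              refine ⟨hvS, fun hvF => h1 ⟨hvF, fun hvSi => disj j i hne v hvS hvSi⟩⟩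
            · rintro ⟨hvS, hvF⟩
              exact ⟨hvS, fun h => hvF h.1,
                fun h => disj j i hne v hvS (hF'.1 h)⟩
          rw [hEq]; exact (fvs_iff F).mp hF j
      have hGF : G = F := hmin G hGsub hGfvs
      have h1 : G ∩ S i = F' := by
        ext v
        simp only [hGdef, Set.mem_inter_iff, Set.mem_union, Set.mem_diff]
        constructor
        · rintro ⟨h1 | h2, hvS⟩
          · exact absurd hvS h1.2
          · exact h2
        · intro hv
          exact ⟨Or.inr hv, hF'.1 hv⟩
      rw [← h1, hGF]
  -- backward direction
  have bwd : ∀ G : Fin m → Set V, (∀ i, IsMinimalFVSOn r (S i) (G i)) →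
      IsMinimalFVS r (⋃ i, G i) := by
    intro G hG
    have hsub : ∀ i, G i ⊆ S i := fun i => (hG i).1.1
    have key : ∀ i, S i \ (⋃ j, G j) = S i \ G i := by
      intro i
      ext v
      simp only [Set.mem_diff, Set.mem_iUnion, not_exists]
      constructor
      · rintro ⟨hvS, h⟩; exact ⟨hvS, h i⟩
      · rintro ⟨hvS, h⟩
        refine ⟨hvS, fun j hvj => ?_⟩
        rcases eq_or_ne j i with rfl | hne
        · exact h hvj
        · exact disj j i hne v (hsub j hvj) hvS
    constructor
    · rw [fvs_iff]
      intro i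
      rw [key i]
      exact (hG i).1.2
    · intro F' hsub' hF'
      have heach : ∀ i, F' ∩ S i = G i := by
        intro i
        refine (hG i).2 (F' ∩ S i) ?_ ⟨Set.inter_subset_right, ?_⟩
        · rintro v ⟨hvF, hvS⟩
          rcases Set.mem_iUnion.mp (hsub' hvF) with ⟨j, hvj⟩
          rcases eq_or_ne j i with rfl | hne
          · exact hvj
          · exact absurd (disj j i hne v (hsub j hvj) hvS) not_false
        · have h := (fvs_iff F').mp hF' i
          rwa [show S i \ (F' ∩ S i) = S i \ F' by ext v; simp [Set.mem_diff]]
      calc F' = ⋃ i, F' ∩ S i := cover F'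
        _ = ⋃ i, G i := by simp_rw [heach]
  -- the bijection
  let e : {F : Set V // IsMinimalFVS r F} ≃ (∀ i, {F : Set V // IsMinimalFVSOn r (S i) F}) :=
    { toFun := fun F i => ⟨F.1 ∩ S i, fwd F.1 F.2 i⟩
      invFun := fun G => ⟨⋃ i, (G i).1, bwd _ (fun i => (G i).2)⟩
      left_inv := fun F => Subtype.ext (cover F.1).symm
      right_inv := fun G => funext fun i =>
        Subtype.ext (inter_union _ (fun j => (G j).2.1.1) i) }
  calc {F : Set V | IsMinimalFVS r F}.ncard
      = Nat.card {F : Set V // IsMinimalFVS r F} := (Nat.card_coe_set_eq _).symm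
    _ = Nat.card (∀ i, {F : Set V // IsMinimalFVSOn r (S i) F}) := Nat.card_congr e
    _ = ∏ i, Nat.card {F : Set V // IsMinimalFVSOn r (S i) F} := Nat.card_pi
    _ = ∏ i, {F : Set V | IsMinimalFVSOn r (S i) F}.ncard := by
        refine Finset.prod_congr rfl fun i _ => ?_
        exact Nat.card_coe_set_eq _
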